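/- Let λ ∈ ℝ, λ ≠ 0. For (p₀,p₁) ∈ ℝ² set m² := (2/λ)²·sinh²(λp₀/2) + e^{−λp₀}p₁² (the value of the Casimir of the quantum Euclidean group) and T(p₀,p₁) := −(λ⁻¹sinh(λp₀) + e^{−λp₀}p₁·((λ/2)p₁ − i)) ∈ ℂ (the symbol of the equivariant Dirac operator). Then for all (p₀,p₁) ∈ ℝ²: |T(p₀,p₁)|² = (λ⁻¹sinh(λp₀) + (λ/2)p₁²e^{−λp₀})² + (e^{−λp₀}p₁)² = m²·(1 + λ²m²/4). In particular the square of the U_κ(iso(2))-equivariant Dirac operator equals ρ(m²(1 + λ²m²/4)). -/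

import Mathlib

/-- The off-diagonal symbol of the `U_κ(iso(2))`-equivariant Dirac operator:
`T(p₀,p₁) = −(λ⁻¹sinh(λp₀) + e^{−λp₀}p₁((λ/2)p₁ − i))`. -/
noncomputable def Tsym (l : ℝ) (p : ℝ × ℝ) : ℂ :=
  -(((l⁻¹ * Real.sinh (l * p.1) : ℝ) : ℂ) +
      ((Real.exp (-(l * p.1)) * p.2 : ℝ) : ℂ) * (((l / 2 * p.2 : ℝ) : ℂ) - Complex.I))

/-- The Casimir function of the quantum Euclidean group:
`m² = (2/λ)²sinh²(λp₀/2) + e^{−λp₀}p₁²`. -/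
noncomputable def casimir (l : ℝ) (p : ℝ × ℝ) : ℝ :=
  (2 / l) ^ 2 * Real.sinh (l * p.1 / 2) ^ 2 + Real.exp (-(l * p.1)) * p.2 ^ 2

/-- The squared modulus of the Dirac symbol equals `r²` in deformed polar coordinates,
and equals `m²(1 + λ²m²/4)`: the square of the equivariant Dirac operator is
`ρ(m²(1 + λ²m²/4))`. -/
theorem dirac_symbol_squared (l : ℝ) (hl : l ≠ 0) (p : ℝ × ℝ) :
    ‖Tsym l p‖ ^ 2 =
      (l⁻¹ * Real.sinh (l * p.1) + l / 2 * p.2 ^ 2 * Real.exp (-(l * p.1))) ^ 2 +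
        (Real.exp (-(l * p.1)) * p.2) ^ 2 ∧
    ‖Tsym l p‖ ^ 2 = casimir l p * (1 + l ^ 2 * casimir l p / 4) := by
  set a : ℝ := l⁻¹ * Real.sinh (l * p.1)
  set b : ℝ := Real.exp (-(l * p.1)) * p.2
  set c : ℝ := l / 2 * p.2
  have h1 : ‖Tsym l p‖ ^ 2 = (a + b * c) ^ 2 + b ^ 2 := by
    have hT : Tsym l p = Complex.ofReal (-(a + b * c)) + Complex.ofReal b * Complex.I := by
      simp only [Tsym, a, b, c]
      push_cast
      ring
    rw [hT, Complex.sq_norm, Complex.normSq_add_mul_I]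
    ring
  constructor
  · rw [h1]; ring
  · rw [h1]
    set u : ℝ := Real.exp (-(l * p.1 / 2)) with hu
    have hune : u ≠ 0 := ne_of_gt (Real.exp_pos _)
    have hui : u⁻¹ = Real.exp (l * p.1 / 2) := by
      rw [hu, ← Real.exp_neg]; congr 1; ring
    have he : Real.exp (-(l * p.1)) = u * u := by
      rw [hu, ← Real.exp_add]; congr 1; ring
    have he2 : Real.exp (l * p.1) = u⁻¹ * u⁻¹ := by
      rw [hui, ← Real.exp_add]; congr 1; ring
    have hs1 : Real.sinh (l * p.1) = (u⁻¹ * u⁻¹ - u * u) / 2 := by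
      rw [Real.sinh_eq, he2, he]
    have hs2 : Real.sinh (l * p.1 / 2) = (u⁻¹ - u) / 2 := by
      rw [Real.sinh_eq, hui, ← hu]
    simp only [casimir, a, b, c, he, hs1, hs2]
    field_simp
    ring
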